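/- Let Q be a commutative nontrivial ZDF involutive quantale and X a nonempty set. Then there exists a global section of the Gelfand spectrum over X; that is, the object X of the category of Q-valued relations is Kochen–Specker non-contextual. -/

import Mathlib

open Classical

noncomputable section

universe u v

/-- A commutative involutive quantale: a complete lattice with a commutative
monoid operation distributing over arbitrary joins, together with a
join-preserving involution compatible with multiplication and unit. -/
structure CommInvQuantale (Q : Type u) [CompleteLattice Q] : Type u where
  mul : Q → Q → Q
  one : Q
  mul_comm : ∀ a b : Q, mul a b = mul b a
  mul_assoc : ∀ a b c : Q, mul (mul a b) c = mul a (mul b c)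
  one_mul : ∀ a : Q, mul one a = a
  mul_sSup : ∀ (a : Q) (S : Set Q), mul a (sSup S) = ⨆ y ∈ S, mul a y
  inv : Q → Q
  inv_inv : ∀ a : Q, inv (inv a) = a
  inv_sSup : ∀ S : Set Q, inv (sSup S) = ⨆ y ∈ S, inv y
  inv_mul : ∀ a b : Q, inv (mul a b) = mul (inv a) (inv b)
  inv_one : inv one = one

namespace CommInvQuantale

variable {Q : Type u} [CompleteLattice Q] {X : Type v}

/-- Zero-divisor free: `x·y = 0` implies `x = 0` or `y = 0` (where `0 = ⊥`). -/
def ZDF (Qd : CommInvQuantale Q) : Prop :=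
  ∀ a b : Q, Qd.mul a b = ⊥ → a = ⊥ ∨ b = ⊥

/-- Nontrivial: `1 ≠ 0`. -/
def NontrivialQ (Qd : CommInvQuantale Q) : Prop := Qd.one ≠ (⊥ : Q)

/-- The zero `Q`-relation. -/
def qzero : X → X → Q := fun _ _ => (⊥ : Q)

/-- The support of a `Q`-relation. -/
def supp (f : X → X → Q) : Set X := {x | ∃ y, f x y ≠ (⊥ : Q)}

/-- The cosupport of a `Q`-relation. -/
def cosupp (f : X → X → Q) : Set X := {x | ∃ y, f y x ≠ (⊥ : Q)}

/-- The kernel of a character of `A`. -/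
def kerChar (A : Set (X → X → Q)) (ρ : (X → X → Q) → Q) : Set (X → X → Q) :=
  {f ∈ A | ρ f = (⊥ : Q)}

/-- The map `w : Q → 2` sending `0` to `0` and every nonzero element to `1`
(with `2` modelled by `Bool`). -/
def wmap : Q → Bool := fun q => if q = (⊥ : Q) then false else true

/-- The kernel of a homomorphism `γ : A → 2` (with `2` modelled by `Bool`). -/
def kerTwo (A : Set (X → X → Q)) (γ : (X → X → Q) → Bool) : Set (X → X → Q) :=
  {f ∈ A | γ f = false}

variable (Qd : CommInvQuantale Q)

/-- Composition of `Q`-relations: `(f ∘ g)(x,z) = ⋁_y g(x,y) · f(y,z)`,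
so `qcomp Qd f g` is "`f` after `g`". -/
def qcomp (f g : X → X → Q) : X → X → Q := fun x z => ⨆ y : X, Qd.mul (g x y) (f y z)

/-- The identity `Q`-relation. -/
def qid : X → X → Q := fun x y => if x = y then Qd.one else ⊥

/-- The dagger of a `Q`-relation: `f†(x,y) = f(y,x)*`. -/
def qdag (f : X → X → Q) : X → X → Q := fun x y => Qd.inv (f y x)

/-- Scalar multiplication of a `Q`-relation: `(q•f)(x,y) = q·f(x,y)`. -/
def qsmul (q : Q) (f : X → X → Q) : X → X → Q := fun x y => Qd.mul q (f x y)

/-- A commutative unital *-subsemialgebra of `Hom(X,X)`: contains the zero and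
identity relations, closed under pointwise binary join, composition, scalar
multiplication and dagger, and composition is commutative on it. -/
structure IsSubalg (A : Set (X → X → Q)) : Prop where
  zero_mem : qzero ∈ A
  id_mem : Qd.qid ∈ A
  sup_mem : ∀ f ∈ A, ∀ g ∈ A, f ⊔ g ∈ A
  comp_mem : ∀ f ∈ A, ∀ g ∈ A, Qd.qcomp f g ∈ A
  smul_mem : ∀ (q : Q), ∀ f ∈ A, Qd.qsmul q f ∈ A
  dag_mem : ∀ f ∈ A, Qd.qdag f ∈ A
  comp_comm : ∀ f ∈ A, ∀ g ∈ A, Qd.qcomp f g = Qd.qcomp g f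

/-- The commutant of a set of `Q`-relations. -/
def commutant (B : Set (X → X → Q)) : Set (X → X → Q) :=
  { f | ∀ g ∈ B, Qd.qcomp f g = Qd.qcomp g f }

/-- A commutative von Neumann unital *-subsemialgebra: a commutative unital
*-subsemialgebra equal to its double commutant. -/
def IsVN (A : Set (X → X → Q)) : Prop :=
  Qd.IsSubalg A ∧ Qd.commutant (Qd.commutant A) = A

/-- A character of `A`: a map `ρ : Hom(X,X) → Q` with `ρ(0) = 0`, `ρ(id) = 1`,
preserving binary joins, composition and dagger on `A`. -/
structure IsChar (A : Set (X → X → Q)) (ρ : (X → X → Q) → Q) : Prop where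
  map_zero : ρ qzero = (⊥ : Q)
  map_id : ρ Qd.qid = Qd.one
  map_sup : ∀ f ∈ A, ∀ g ∈ A, ρ (f ⊔ g) = ρ f ⊔ ρ g
  map_comp : ∀ f ∈ A, ∀ g ∈ A, ρ (Qd.qcomp f g) = Qd.mul (ρ f) (ρ g)
  map_dag : ∀ f ∈ A, ρ (Qd.qdag f) = Qd.inv (ρ f)

/-- An ideal of `A`. -/
structure IsIdeal (A J : Set (X → X → Q)) : Prop where
  subset : J ⊆ A
  zero_mem : qzero ∈ J
  sup_mem : ∀ a ∈ J, ∀ b ∈ J, a ⊔ b ∈ J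
  absorb : ∀ f ∈ A, ∀ a ∈ J, Qd.qcomp f a ∈ J

/-- A prime k*-ideal of `A`: a proper prime ideal which is a k-ideal closed
under dagger. -/
structure IsPrimeKStarIdeal (A J : Set (X → X → Q)) : Prop where
  ideal : Qd.IsIdeal A J
  proper : J ≠ A
  prime : ∀ f ∈ A, ∀ g ∈ A, Qd.qcomp f g ∈ J → f ∈ J ∨ g ∈ J
  kideal : ∀ a ∈ J, ∀ b ∈ A, a ⊔ b ∈ J → b ∈ J
  dag_mem : ∀ a ∈ J, Qd.qdag a ∈ J

/-- A global section of the Gelfand spectrum over `X`: an assignment of a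
character to every commutative von Neumann unital *-subsemialgebra of
`Hom(X,X)`, compatible with restriction along inclusions. -/
def IsGelfandGlobalSection (ρ : Set (X → X → Q) → (X → X → Q) → Q) : Prop :=
  (∀ A : Set (X → X → Q), Qd.IsVN A → Qd.IsChar A (ρ A)) ∧
  (∀ A B : Set (X → X → Q), Qd.IsVN A → Qd.IsVN B → A ⊆ B → ∀ f ∈ A, ρ A f = ρ B f)

/-- A global section of the prime spectrum over `X`: an assignment of a prime
k*-ideal to every commutative von Neumann unital *-subsemialgebra of
`Hom(X,X)`, compatible with restriction along inclusions. -/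
def IsPrimeGlobalSection (χ : Set (X → X → Q) → Set (X → X → Q)) : Prop :=
  (∀ A : Set (X → X → Q), Qd.IsVN A → Qd.IsPrimeKStarIdeal A (χ A)) ∧
  (∀ A B : Set (X → X → Q), Qd.IsVN A → Qd.IsVN B → A ⊆ B → χ A = A ∩ χ B)

/-- An idempotent element of `A`. -/
def IsIdem (A : Set (X → X → Q)) (p : X → X → Q) : Prop :=
  p ∈ A ∧ Qd.qcomp p p = p

/-- A subunital idempotent of `A`: an idempotent with an orthogonal idempotent
complement summing to the identity. -/
def IsSubunital (A : Set (X → X → Q)) (p : X → X → Q) : Prop :=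
  Qd.IsIdem A p ∧ ∃ q, Qd.IsIdem A q ∧ Qd.qcomp p q = qzero ∧ p ⊔ q = Qd.qid

/-- A primitive subunital idempotent of `A`. -/
def IsPrimitive (A : Set (X → X → Q)) (p : X → X → Q) : Prop :=
  Qd.IsSubunital A p ∧ p ≠ qzero ∧
    ¬ ∃ s t, Qd.IsSubunital A s ∧ s ≠ qzero ∧ Qd.IsSubunital A t ∧ t ≠ qzero ∧
      Qd.qcomp s t = qzero ∧ s ⊔ t = p

/-- The unique quantale map `! : 2 → Q` (with `2` modelled by `Bool`). -/
def bang : Bool → Q := fun b => if b then Qd.one else ⊥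

/-- A homomorphism `γ : A → 2` (with `2` the two-element quantale, modelled by
`Bool` with join `||` and multiplication `&&`, trivial involution). -/
structure IsTwoHom (A : Set (X → X → Q)) (γ : (X → X → Q) → Bool) : Prop where
  map_zero : γ qzero = false
  map_id : γ Qd.qid = true
  map_sup : ∀ f ∈ A, ∀ g ∈ A, γ (f ⊔ g) = (γ f || γ g)
  map_comp : ∀ f ∈ A, ∀ g ∈ A, γ (Qd.qcomp f g) = (γ f && γ g)
  map_dag : ∀ f ∈ A, γ (Qd.qdag f) = γ f

/-- The Gelfand spectrum of `A`: the set of characters of `A`. -/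
def SpecG (A : Set (X → X → Q)) : Type (max u v) :=
  {ρ : (X → X → Q) → Q // Qd.IsChar A ρ}

/-- The prime spectrum of `A`: the set of prime k*-ideals of `A`. -/
def SpecP (A : Set (X → X → Q)) : Type (max u v) :=
  {J : Set (X → X → Q) // Qd.IsPrimeKStarIdeal A J}

/-- The Zariski topology on the Gelfand spectrum, with basic closed sets
`V_G(J) = {ρ | J ⊆ ker ρ}` for ideals `J` of `A`. -/
def zariskiG (A : Set (X → X → Q)) : TopologicalSpace (Qd.SpecG A) :=
  TopologicalSpace.generateFrom
    {U | ∃ J : Set (X → X → Q), Qd.IsIdeal A J ∧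
      U = {ρ : Qd.SpecG A | J ⊆ kerChar A ρ.1}ᶜ}

/-- The Zariski topology on the prime spectrum, with basic closed sets
`V_P(J) = {K | J ⊆ K}` for ideals `J` of `A`. -/
def zariskiP (A : Set (X → X → Q)) : TopologicalSpace (Qd.SpecP A) :=
  TopologicalSpace.generateFrom
    {U | ∃ J : Set (X → X → Q), Qd.IsIdeal A J ∧
      U = {K : Qd.SpecP A | J ⊆ K.1}ᶜ}

/-! ### Auxiliary lemmas for the construction of a global section -/

theorem aux_mul_bot (a : Q) : Qd.mul a ⊥ = ⊥ := by
  have h := Qd.mul_sSup a ∅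
  simpa using h

theorem aux_bot_mul (a : Q) : Qd.mul ⊥ a = ⊥ := by
  rw [Qd.mul_comm]; exact Qd.aux_mul_bot a

theorem aux_mul_iSup {ι : Sort*} (a : Q) (f : ι → Q) :
    Qd.mul a (⨆ i, f i) = ⨆ i, Qd.mul a (f i) := by
  rw [← sSup_range, Qd.mul_sSup, iSup_range]

theorem aux_iSup_mul {ι : Sort*} (a : Q) (f : ι → Q) :
    Qd.mul (⨆ i, f i) a = ⨆ i, Qd.mul (f i) a := by
  rw [Qd.mul_comm, Qd.aux_mul_iSup]
  exact iSup_congr fun i => Qd.mul_comm a (f i)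

theorem aux_inv_bot : Qd.inv (⊥ : Q) = ⊥ := by
  have h := Qd.inv_sSup ∅
  simpa using h

theorem aux_inv_eq_bot {a : Q} : Qd.inv a = ⊥ ↔ a = ⊥ := by
  constructor
  · intro h
    have h2 := congrArg Qd.inv h
    rwa [Qd.inv_inv, Qd.aux_inv_bot] at h2
  · rintro rfl; exact Qd.aux_inv_bot

theorem aux_ne_bot_of_le {a b : Q} (h : a ≤ b) (ha : a ≠ ⊥) : b ≠ ⊥ :=
  fun hb => ha (le_bot_iff.mp (hb ▸ h))

theorem aux_mul_ne_bot (hZDF : Qd.ZDF) {a b : Q} (ha : a ≠ ⊥) (hb : b ≠ ⊥) :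
    Qd.mul a b ≠ ⊥ := fun h => (hZDF a b h).elim ha hb

theorem aux_mul_ne_bot_left {a b : Q} (h : Qd.mul a b ≠ ⊥) : a ≠ ⊥ :=
  fun ha => h (by rw [ha, Qd.aux_bot_mul])

theorem aux_mul_ne_bot_right {a b : Q} (h : Qd.mul a b ≠ ⊥) : b ≠ ⊥ :=
  fun hb => h (by rw [hb, Qd.aux_mul_bot])

theorem aux_qcomp_assoc (f g h : X → X → Q) :
    Qd.qcomp (Qd.qcomp f g) h = Qd.qcomp f (Qd.qcomp g h) := by
  funext x z
  show (⨆ y, Qd.mul (h x y) (⨆ w, Qd.mul (g y w) (f w z)))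
      = ⨆ w, Qd.mul (⨆ y, Qd.mul (h x y) (g y w)) (f w z)
  simp only [Qd.aux_mul_iSup, Qd.aux_iSup_mul]
  rw [iSup_comm]
  exact iSup_congr fun w => iSup_congr fun y => (Qd.mul_assoc _ _ _).symm

theorem aux_iSup_mem_commutant {S : Set (X → X → Q)} {ι : Sort*} (F : ι → X → X → Q)
    (hF : ∀ i, F i ∈ Qd.commutant S) :
    (fun x y => ⨆ i, F i x y) ∈ Qd.commutant S := by
  intro g hg
  funext x z
  show (⨆ y, Qd.mul (g x y) (⨆ i, F i y z)) = ⨆ y, Qd.mul (⨆ i, F i x y) (g y z)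
  rw [show (⨆ y, Qd.mul (g x y) (⨆ i, F i y z)) = ⨆ i, ⨆ y, Qd.mul (g x y) (F i y z) by
        simp only [Qd.aux_mul_iSup]; exact iSup_comm,
      show (⨆ y, Qd.mul (⨆ i, F i x y) (g y z)) = ⨆ i, ⨆ y, Qd.mul (F i x y) (g y z) by
        simp only [Qd.aux_iSup_mul]; exact iSup_comm]
  exact iSup_congr fun i => congrFun (congrFun (hF i g hg) x) z

theorem aux_subset_bicommutant (A : Set (X → X → Q)) :
    A ⊆ Qd.commutant (Qd.commutant A) := fun f hf g hg => (hg f hf).symm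

/-- The pointwise supremum of all elements of `A`. -/
def Esup (A : Set (X → X → Q)) : X → X → Q := fun x y => ⨆ g : A, (g : X → X → Q) x y

theorem aux_Esup_mem {A : Set (X → X → Q)} (hA : Qd.IsVN A) : Esup A ∈ A := by
  have h : Esup A ∈ Qd.commutant (Qd.commutant A) :=
    Qd.aux_iSup_mem_commutant (fun g : A => (g : X → X → Q))
      (fun g => Qd.aux_subset_bicommutant A g.2)
  rwa [hA.2] at h

theorem aux_le_Esup {A : Set (X → X → Q)} {f : X → X → Q} (hf : f ∈ A) (x y : X) :
    f x y ≤ Esup A x y :=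
  le_iSup (fun g : A => (g : X → X → Q) x y) ⟨f, hf⟩

theorem aux_E_refl {A : Set (X → X → Q)} (hA : Qd.IsVN A) (hNT : Qd.NontrivialQ) (x : X) :
    Esup A x x ≠ ⊥ := by
  apply aux_ne_bot_of_le (aux_le_Esup hA.1.id_mem x x)
  simpa [qid, NontrivialQ] using hNT

theorem aux_E_symm {A : Set (X → X → Q)} (hA : Qd.IsVN A) {x y : X}
    (h : Esup A x y ≠ ⊥) : Esup A y x ≠ ⊥ := by
  have h1 : Qd.inv (Esup A x y) ≠ ⊥ := fun hb => h (Qd.aux_inv_eq_bot.mp hb)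
  exact aux_ne_bot_of_le
    (aux_le_Esup (hA.1.dag_mem _ (Qd.aux_Esup_mem hA)) y x) h1

theorem aux_E_trans {A : Set (X → X → Q)} (hA : Qd.IsVN A) (hZDF : Qd.ZDF) {x y z : X}
    (h1 : Esup A x y ≠ ⊥) (h2 : Esup A y z ≠ ⊥) : Esup A x z ≠ ⊥ := by
  have hEE : Qd.qcomp (Esup A) (Esup A) ∈ A :=
    hA.1.comp_mem _ (Qd.aux_Esup_mem hA) _ (Qd.aux_Esup_mem hA)
  apply aux_ne_bot_of_le (aux_le_Esup hEE x z)
  exact aux_ne_bot_of_le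
    (le_iSup (fun w => Qd.mul (Esup A x w) (Esup A w z)) y)
    (Qd.aux_mul_ne_bot hZDF h1 h2)

/-- The key predicate: `f` has a nonzero entry inside the block of `x0`
determined by the support of the top element of `A`. -/
def GCond (x0 : X) (A : Set (X → X → Q)) (f : X → X → Q) : Prop :=
  ∃ x z, Esup A x0 x ≠ ⊥ ∧ Esup A x0 z ≠ ⊥ ∧ f x z ≠ ⊥

theorem aux_cond_comp (hZDF : Qd.ZDF) (x0 : X) {A : Set (X → X → Q)}
    (hA : Qd.IsVN A) {f g : X → X → Q} (hf : f ∈ A) (hg : g ∈ A) :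
    GCond x0 A (Qd.qcomp f g) ↔ (GCond x0 A f ∧ GCond x0 A g) := by
  constructor
  · rintro ⟨x, z, hx, hz, hc⟩
    have hex : ∃ y, Qd.mul (g x y) (f y z) ≠ ⊥ := by
      by_contra hcon
      push_neg at hcon
      exact hc (iSup_eq_bot.mpr hcon)
    obtain ⟨y, hy⟩ := hex
    have hgxy : g x y ≠ ⊥ := Qd.aux_mul_ne_bot_left hy
    have hfyz : f y z ≠ ⊥ := Qd.aux_mul_ne_bot_right hy
    have hEy : Esup A x0 y ≠ ⊥ :=
      Qd.aux_E_trans hA hZDF hx (aux_ne_bot_of_le (aux_le_Esup hg x y) hgxy)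
    exact ⟨⟨y, z, hEy, hz, hfyz⟩, ⟨x, y, hx, hEy, hgxy⟩⟩
  · rintro ⟨⟨y', z, hy', hz, hf'⟩, ⟨x, y, hx, hy, hg'⟩⟩
    have hE : Esup A ∈ A := Qd.aux_Esup_mem hA
    have hyy' : Esup A y y' ≠ ⊥ := Qd.aux_E_trans hA hZDF (Qd.aux_E_symm hA hy) hy'
    have key : Qd.qcomp (Qd.qcomp f g) (Esup A) x z ≠ ⊥ := by
      rw [Qd.aux_qcomp_assoc, hA.1.comp_comm g hg _ hE]
      have h1 : Qd.qcomp (Esup A) g x y' ≠ ⊥ :=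
        aux_ne_bot_of_le (le_iSup (fun v => Qd.mul (g x v) (Esup A v y')) y)
          (Qd.aux_mul_ne_bot hZDF hg' hyy')
      exact aux_ne_bot_of_le
        (le_iSup (fun u => Qd.mul (Qd.qcomp (Esup A) g x u) (f u z)) y')
        (Qd.aux_mul_ne_bot hZDF h1 hf')
    have hex : ∃ w, Qd.mul (Esup A x w) (Qd.qcomp f g w z) ≠ ⊥ := by
      by_contra hcon
      push_neg at hcon
      exact key (iSup_eq_bot.mpr hcon)
    obtain ⟨w, hw⟩ := hex
    exact ⟨w, z, Qd.aux_E_trans hA hZDF hx (Qd.aux_mul_ne_bot_left hw), hz,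
      Qd.aux_mul_ne_bot_right hw⟩

theorem aux_cond_restrict (hZDF : Qd.ZDF) (hNT : Qd.NontrivialQ) (x0 : X)
    {A B : Set (X → X → Q)} (hA : Qd.IsVN A) (hB : Qd.IsVN B) (hAB : A ⊆ B)
    {f : X → X → Q} (hf : f ∈ A) : GCond x0 A f ↔ GCond x0 B f := by
  constructor
  · rintro ⟨x, z, hx, hz, hfxz⟩
    have hle : ∀ u v : X, Esup A u v ≤ Esup B u v := fun u v =>
      iSup_le fun g => aux_le_Esup (hAB g.2) u v
    exact ⟨x, z, aux_ne_bot_of_le (hle x0 x) hx,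
      aux_ne_bot_of_le (hle x0 z) hz, hfxz⟩
  · rintro ⟨x, z, hx, hz, hfxz⟩
    have hEB : Esup B ∈ B := Qd.aux_Esup_mem hB
    have key : Qd.qcomp (Esup B) f x0 z ≠ ⊥ := by
      rw [← hB.1.comp_comm f (hAB hf) _ hEB]
      exact aux_ne_bot_of_le (le_iSup (fun u => Qd.mul (Esup B x0 u) (f u z)) x)
        (Qd.aux_mul_ne_bot hZDF hx hfxz)
    have hex : ∃ u, Qd.mul (f x0 u) (Esup B u z) ≠ ⊥ := by
      by_contra hcon
      push_neg at hcon
      exact key (iSup_eq_bot.mpr hcon)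
    obtain ⟨u, hu⟩ := hex
    have hfu : f x0 u ≠ ⊥ := Qd.aux_mul_ne_bot_left hu
    exact ⟨x0, u, Qd.aux_E_refl hA hNT x0,
      aux_ne_bot_of_le (aux_le_Esup hf x0 u) hfu, hfu⟩

/-- For a commutative nontrivial ZDF involutive quantale `Q` and a
nonempty set `X`, there exists a global section of the Gelfand spectrum over
`X`; i.e. the object `X` of `Rel_Q` is Kochen–Specker non-contextual. -/
theorem gelfand_global_section_exists
    (Qd : CommInvQuantale Q) (hZDF : Qd.ZDF) (hNT : Qd.NontrivialQ)
    (X : Type v) (hX : Nonempty X) :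
    ∃ ρ : Set (X → X → Q) → (X → X → Q) → Q, Qd.IsGelfandGlobalSection ρ := by
  obtain ⟨x0⟩ := hX
  refine ⟨fun A f => if GCond x0 A f then Qd.one else ⊥, ?_, ?_⟩
  · intro A hA
    refine ⟨?_, ?_, ?_, ?_, ?_⟩
    · -- map_zero
      exact if_neg (by rintro ⟨x, z, _, _, h⟩; exact h rfl)
    · -- map_id
      exact if_pos ⟨x0, x0, Qd.aux_E_refl hA hNT x0, Qd.aux_E_refl hA hNT x0,
        by simpa [qid, NontrivialQ] using hNT⟩
    · -- map_sup
      intro f hf g hg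
      have hiff : GCond x0 A (f ⊔ g) ↔ (GCond x0 A f ∨ GCond x0 A g) := by
        constructor
        · rintro ⟨x, z, hx, hz, hc⟩
          by_cases hfz : f x z = ⊥
          · refine Or.inr ⟨x, z, hx, hz, fun hgz => ?_⟩
            exact hc (by simp [Pi.sup_apply, hfz, hgz])
          · exact Or.inl ⟨x, z, hx, hz, hfz⟩
        · rintro (⟨x, z, hx, hz, hc⟩ | ⟨x, z, hx, hz, hc⟩)
          · exact ⟨x, z, hx, hz, fun h =>
              hc (sup_eq_bot_iff.mp (by simpa [Pi.sup_apply] using h)).1⟩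
          · exact ⟨x, z, hx, hz, fun h =>
              hc (sup_eq_bot_iff.mp (by simpa [Pi.sup_apply] using h)).2⟩
      by_cases h1 : GCond x0 A f <;> by_cases h2 : GCond x0 A g <;>
        simp [hiff, h1, h2]
    · -- map_comp
      intro f hf g hg
      have hiff := Qd.aux_cond_comp hZDF x0 hA hf hg
      by_cases h1 : GCond x0 A f <;> by_cases h2 : GCond x0 A g <;>
        simp [hiff, h1, h2, Qd.one_mul, Qd.aux_mul_bot, Qd.aux_bot_mul]
    · -- map_dag
      intro f hf
      have hiff : GCond x0 A (Qd.qdag f) ↔ GCond x0 A f := by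
        constructor
        · rintro ⟨x, z, hx, hz, hc⟩
          exact ⟨z, x, hz, hx, fun h => hc (by simp [qdag, h, Qd.aux_inv_bot])⟩
        · rintro ⟨x, z, hx, hz, hc⟩
          exact ⟨z, x, hz, hx, fun h => hc (Qd.aux_inv_eq_bot.mp h)⟩
      by_cases h : GCond x0 A f <;>
        simp [hiff, h, Qd.inv_one, Qd.aux_inv_bot]
  · intro A B hA hB hAB f hf
    by_cases h : GCond x0 A f
    · have h2 := (Qd.aux_cond_restrict hZDF hNT x0 hA hB hAB hf).mp h
      simp [h, h2]
    · have h2 : ¬ GCond x0 B f :=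
        fun hb => h ((Qd.aux_cond_restrict hZDF hNT x0 hA hB hAB hf).mpr hb)
      simp [h, h2]

end CommInvQuantale
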